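/- Let p be a positive integer, 0 < a ≤ b real numbers, and S a p×p symmetric real matrix with a·I_p ⪯ S ⪯ b·I_p (i.e., S − a·I_p and b·I_p − S are positive semidefinite). Let K be a p×p symmetric positive definite matrix satisfying log det K + trace(K⁻¹ S) ≤ trace(S). Then every eigenvalue l of K satisfies log l + a/l ≤ p·b − (p−1)·(log a + 1). -/

import Mathlib

open Matrix Finset

lemma aux_trace_nonneg {n : ℕ} {M : Matrix (Fin n) (Fin n) ℝ} (hM : M.PosSemidef) :
    0 ≤ M.trace := by
  refine Finset.sum_nonneg fun i _ => ?_
  have := (posSemidef_iff_dotProduct_mulVec.mp hM).2 (Pi.single i 1)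
  simpa [dotProduct, Pi.single_apply, mulVec] using this

lemma aux_trace_mul_nonneg {n : ℕ} {M N : Matrix (Fin n) (Fin n) ℝ}
    (hM : M.PosSemidef) (hN : N.PosSemidef) : 0 ≤ (M * N).trace := by
  obtain ⟨B, hB⟩ : ∃ B : Matrix (Fin n) (Fin n) ℝ, N = Bᴴ * B := by
    open scoped MatrixOrder in exact CStarAlgebra.nonneg_iff_eq_star_mul_self.mp hN.nonneg
  have h : (M * N).trace = (B * M * Bᴴ).trace := by
    rw [hB, ← Matrix.mul_assoc, Matrix.trace_mul_comm, Matrix.mul_assoc]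
  rw [h]
  exact aux_trace_nonneg (hM.mul_mul_conjTranspose_same B)

lemma aux_log_bound {a x : ℝ} (ha : 0 < a) (hx : 0 < x) :
    Real.log a + 1 ≤ Real.log x + a / x := by
  have h := Real.log_le_sub_one_of_pos (show (0:ℝ) < a / x from div_pos ha hx)
  rw [Real.log_div (ne_of_gt ha) (ne_of_gt hx)] at h
  linarith

theorem stmt15 (p : ℕ) (hp : 0 < p) (a b : ℝ) (ha : 0 < a) (hab : a ≤ b)
    (S : Matrix (Fin p) (Fin p) ℝ) (hSsymm : S.IsHermitian)
    (hlow : (S - a • (1 : Matrix (Fin p) (Fin p) ℝ)).PosSemidef)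
    (hhigh : (b • (1 : Matrix (Fin p) (Fin p) ℝ) - S).PosSemidef)
    (K : Matrix (Fin p) (Fin p) ℝ) (hK : K.PosDef)
    (hineq : Real.log K.det + (K⁻¹ * S).trace ≤ S.trace)
    (l : ℝ) (hl : l ∈ spectrum ℝ K) :
    Real.log l + a / l ≤ (p : ℝ) * b - ((p : ℝ) - 1) * (Real.log a + 1) := by
  have hKH : K.IsHermitian := hK.isHermitian
  set μ := hKH.eigenvalues with hμ
  have hμpos : ∀ i, 0 < μ i := fun i => hK.eigenvalues_pos i
  -- l is an eigenvalue
  rw [Matrix.IsHermitian.spectrum_real_eq_range_eigenvalues hKH] at hl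
  obtain ⟨i₀, hi₀⟩ := hl
  -- trace S ≤ p * b
  have htrS : S.trace ≤ (p : ℝ) * b := by
    have := aux_trace_nonneg hhigh
    rw [Matrix.trace_sub, Matrix.trace_smul, Matrix.trace_one] at this
    simp only [smul_eq_mul, mul_one, Fintype.card_fin] at this
    linarith [this]
  -- K⁻¹ PSD
  have hKinv : (K⁻¹).PosDef := hK.inv
  -- trace(K⁻¹ S) ≥ a * trace K⁻¹
  have h1 : a * (K⁻¹).trace ≤ (K⁻¹ * S).trace := by
    have h0 := aux_trace_mul_nonneg hKinv.posSemidef hlow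
    have : K⁻¹ * (S - a • 1) = K⁻¹ * S - a • K⁻¹ := by
      rw [Matrix.mul_sub, Matrix.mul_smul, Matrix.mul_one]
    rw [this, Matrix.trace_sub, Matrix.trace_smul, smul_eq_mul] at h0
    linarith
  -- spectral theorem pieces
  have hspec := Matrix.IsHermitian.spectral_theorem hKH
  set U : Matrix (Fin p) (Fin p) ℝ := (hKH.eigenvectorUnitary : Matrix (Fin p) (Fin p) ℝ) with hU
  have hUU : Uᴴ * U = 1 := by
    simpa [hU, star_eq_conjTranspose] using Unitary.coe_star_mul_self hKH.eigenvectorUnitary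
  have hUU' : U * Uᴴ = 1 := by
    simpa [hU, star_eq_conjTranspose] using Unitary.coe_mul_star_self hKH.eigenvectorUnitary
  have hμne : ∀ i, μ i ≠ 0 := fun i => ne_of_gt (hμpos i)
  have hKeq : K = U * Matrix.diagonal μ * Uᴴ := by
    have := hspec
    simpa [hU, Function.comp, star_eq_conjTranspose] using this
  -- K⁻¹ = U * diagonal μ⁻¹ * Uᴴ
  have hKinv_eq : K⁻¹ = U * Matrix.diagonal (fun i => (μ i)⁻¹) * Uᴴ := by
    apply Matrix.inv_eq_right_inv
    rw [hKeq]
    calc U * Matrix.diagonal μ * Uᴴ * (U * Matrix.diagonal (fun i => (μ i)⁻¹) * Uᴴ)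
        = U * Matrix.diagonal μ * (Uᴴ * U) * Matrix.diagonal (fun i => (μ i)⁻¹) * Uᴴ := by
          simp only [Matrix.mul_assoc]
      _ = U * (Matrix.diagonal μ * Matrix.diagonal (fun i => (μ i)⁻¹)) * Uᴴ := by
          rw [hUU]; simp [Matrix.mul_assoc]
      _ = 1 := by
          rw [Matrix.diagonal_mul_diagonal]
          have he : (fun i => μ i * (μ i)⁻¹) = fun _ => (1:ℝ) :=
            funext fun i => mul_inv_cancel₀ (hμne i)
          rw [he, Matrix.diagonal_one, Matrix.mul_one, hUU']
  -- trace K⁻¹ = Σ 1/μ i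
  have htrKinv : (K⁻¹).trace = ∑ i, (μ i)⁻¹ := by
    rw [hKinv_eq, Matrix.trace_mul_comm, ← Matrix.mul_assoc, hUU, Matrix.one_mul,
      Matrix.trace_diagonal]
  -- log det K = Σ log μ i
  have hdet : Real.log K.det = ∑ i, Real.log (μ i) := by
    have hd : K.det = ∏ i, μ i := by
      simpa using hKH.det_eq_prod_eigenvalues
    rw [hd, Real.log_prod (fun i _ => hμne i)]
  -- main sum inequality
  have hsum : ∑ i, (Real.log (μ i) + a / μ i) ≤ (p : ℝ) * b := by
    have : ∑ i, (Real.log (μ i) + a / μ i)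
        = Real.log K.det + a * (K⁻¹).trace := by
      rw [hdet, htrKinv, Finset.sum_add_distrib, Finset.mul_sum]
      simp [div_eq_mul_inv]
    rw [this]
    linarith
  -- split off i₀
  have hsplit : ∑ i, (Real.log (μ i) + a / μ i)
      = (Real.log (μ i₀) + a / μ i₀) + ∑ i ∈ Finset.univ.erase i₀, (Real.log (μ i) + a / μ i) := by
    rw [← Finset.add_sum_erase _ _ (Finset.mem_univ i₀)]
  have hrest : ((p : ℝ) - 1) * (Real.log a + 1)
      ≤ ∑ i ∈ Finset.univ.erase i₀, (Real.log (μ i) + a / μ i) := by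
    have hcard : (Finset.univ.erase i₀).card = p - 1 := by
      rw [Finset.card_erase_of_mem (Finset.mem_univ i₀), Finset.card_univ, Fintype.card_fin]
    calc ((p : ℝ) - 1) * (Real.log a + 1)
        = ((Finset.univ.erase i₀).card : ℝ) * (Real.log a + 1) := by
          rw [hcard]
          congr 1
          push_cast [Nat.cast_sub hp]
          ring
      _ ≤ ∑ i ∈ Finset.univ.erase i₀, (Real.log (μ i) + a / μ i) := by
          have := Finset.card_nsmul_le_sum (Finset.univ.erase i₀)
            (fun i => Real.log (μ i) + a / μ i) (Real.log a + 1)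
            (fun i _ => aux_log_bound ha (hμpos i))
          simpa only [nsmul_eq_mul] using this
  have hmain : (Real.log (μ i₀) + a / μ i₀)
      + ∑ i ∈ Finset.univ.erase i₀, (Real.log (μ i) + a / μ i) ≤ (p : ℝ) * b := by
    rw [← hsplit]; exact hsum
  have hfin : Real.log (μ i₀) + a / μ i₀ = Real.log l + a / l := by rw [hμ, hi₀]
  linarith [hmain, hrest, hfin]
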